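/- Let p, q be continuously differentiable real functions on an open interval (a,b) and let f be a three times differentiable solution of f'' + p·f' + q·f = 0 on (a,b). Then v(f')(x) = p'(x)·f'(x)² + q'(x)·f'(x)·f(x) + q(x)·v(f)(x) for all x in (a,b). In particular, if q ≡ 1 and p' ≥ 0 on (a,b), then v(f')(x) ≥ v(f)(x) for all x in (a,b). -/

import Mathlib

/-- v h = (deriv h)^2 - (second derivative of h) * h. -/
noncomputable def v (f : ℝ → ℝ) (x : ℝ) : ℝ := (deriv f x) ^ 2 - deriv^[2] f x * f x


theorem stmt_9 (a b : ℝ) (hab : a < b) (p q f : ℝ → ℝ)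
    (hp : ContDiffOn ℝ 1 p (Set.Ioo a b)) (hq : ContDiffOn ℝ 1 q (Set.Ioo a b))
    (hf : ContDiffOn ℝ 3 f (Set.Ioo a b))
    (hode : ∀ x ∈ Set.Ioo a b, deriv^[2] f x + p x * deriv f x + q x * f x = 0) :
    (∀ x ∈ Set.Ioo a b, v (deriv f) x =
        deriv p x * (deriv f x) ^ 2 + deriv q x * deriv f x * f x + q x * v f x) ∧
    ((∀ x ∈ Set.Ioo a b, q x = 1) → (∀ x ∈ Set.Ioo a b, 0 ≤ deriv p x) →
      ∀ x ∈ Set.Ioo a b, v f x ≤ v (deriv f) x) := by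
  have hs : IsOpen (Set.Ioo a b) := isOpen_Ioo
  have hf1 : ContDiffOn ℝ 2 (deriv f) (Set.Ioo a b) :=
    hf.deriv_of_isOpen hs (by norm_num)
  have hf2 : ContDiffOn ℝ 1 (deriv^[2] f) (Set.Ioo a b) := by
    have := hf1.deriv_of_isOpen hs (by norm_num : (1:WithTop ℕ∞)+1 ≤ 2)
    simpa [Function.iterate_succ, Function.comp] using this
  have main : ∀ x ∈ Set.Ioo a b, v (deriv f) x =
      deriv p x * (deriv f x) ^ 2 + deriv q x * deriv f x * f x + q x * v f x := by
    intro x hx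
    have hmem : Set.Ioo a b ∈ nhds x := hs.mem_nhds hx
    have hpd : DifferentiableAt ℝ p x :=
      (hp.contDiffAt hmem).differentiableAt one_ne_zero
    have hqd : DifferentiableAt ℝ q x :=
      (hq.contDiffAt hmem).differentiableAt one_ne_zero
    have hfd : DifferentiableAt ℝ f x :=
      (hf.contDiffAt hmem).differentiableAt (by norm_num)
    have hf1d : DifferentiableAt ℝ (deriv f) x :=
      (hf1.contDiffAt hmem).differentiableAt (by norm_num)
    have hf2d : DifferentiableAt ℝ (deriv^[2] f) x :=
      (hf2.contDiffAt hmem).differentiableAt one_ne_zero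
    -- f'' = -(p f' + q f) eventually
    have heq : (deriv^[2] f) =ᶠ[nhds x] fun y => -(p y * deriv f y + q y * f y) := by
      filter_upwards [hmem] with y hy
      have := hode y hy
      linarith
    have hderiv3 : deriv (deriv^[2] f) x =
        -(deriv p x * deriv f x + p x * deriv^[2] f x +
          (deriv q x * f x + q x * deriv f x)) := by
      rw [heq.deriv_eq]
      have h1 : deriv (fun y => p y * deriv f y) x
          = deriv p x * deriv f x + p x * deriv (deriv f) x := deriv_mul hpd hf1d
      have h2 : deriv (fun y => q y * f y) x
          = deriv q x * f x + q x * deriv f x := deriv_mul hqd hfd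
      have hdd : deriv (deriv f) x = deriv^[2] f x := by
        simp [Function.iterate_succ, Function.comp]
      rw [deriv.fun_neg, deriv_fun_add (f := fun y => p y * deriv f y) (g := fun y => q y * f y) (hpd.mul hf1d) (hqd.mul hfd), h1, h2, hdd]
    have hdd : deriv (deriv f) x = deriv^[2] f x := by
      simp [Function.iterate_succ, Function.comp]
    have hode' : deriv^[2] f x = -(p x * deriv f x + q x * f x) := by
      have := hode x hx; linarith
    have h22 : deriv^[2] (deriv f) x = deriv (deriv^[2] f) x := by
      simp [Function.iterate_succ_apply', Function.iterate_succ, Function.comp]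
    unfold v
    rw [hdd, h22, hderiv3, hode']
    ring
  refine ⟨main, ?_⟩
  intro hq1 hp' x hx
  have hq'0 : deriv q x = 0 := by
    have : q =ᶠ[nhds x] fun _ => 1 := by
      filter_upwards [hs.mem_nhds hx] with y hy using hq1 y hy
    rw [this.deriv_eq]; simp
  have := main x hx
  rw [hq'0, hq1 x hx] at this
  nlinarith [sq_nonneg (deriv f x), hp' x hx]
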